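/- Let ε > 0 and let f : ℝ × ℝ × [-1,1] → ℝ be such that f, ∂_t f and ∂_x f exist and are continuous on ℝ × ℝ × [-1,1]. Define ρ(t,x) = (1/2)·∫_{-1}^{1} f(t,x,w) dw and g(t,x,v) = f(t,x,v) - ρ(t,x). Then f satisfies ∂_t f(t,x,v) + (1/ε)·v·∂_x f(t,x,v) = (1/ε²)·(ρ(t,x) - f(t,x,v)) for all (t,x,v) if and only if the pair (ρ, g) satisfies, for all (t,x,v): (i) ∂_t ρ(t,x) + (1/ε)·∂_x[(1/2)·∫_{-1}^{1} w·g(t,x,w) dw] = 0, and (ii) ∂_t g(t,x,v) + (1/ε)·[v·∂_x ρ(t,x) + v·∂_x g(t,x,v) - (1/2)·∫_{-1}^{1} w·∂_x g(t,x,w) dw] = -(1/ε²)·g(t,x,v). -/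

import Mathlib

open MeasureTheory

lemma my_param_deriv (F F' : ℝ → ℝ → ℝ)
    (hd : ∀ s : ℝ, ∀ w ∈ Set.Icc (-1:ℝ) 1, HasDerivAt (fun u => F u w) (F' s w) s)
    (hFc : ContinuousOn (fun p : ℝ × ℝ => F p.1 p.2) (Set.univ ×ˢ Set.Icc (-1:ℝ) 1))
    (hF'c : ContinuousOn (fun p : ℝ × ℝ => F' p.1 p.2) (Set.univ ×ˢ Set.Icc (-1:ℝ) 1))
    (t : ℝ) :
    HasDerivAt (fun s => ∫ w in (-1:ℝ)..1, F s w) (∫ w in (-1:ℝ)..1, F' t w) t := by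
  have hIoc : Set.uIoc (-1:ℝ) 1 = Set.Ioc (-1:ℝ) 1 := Set.uIoc_of_le (by norm_num)
  have hsub : Set.uIoc (-1:ℝ) 1 ⊆ Set.Icc (-1:ℝ) 1 := by
    rw [hIoc]; exact Set.Ioc_subset_Icc_self
  have sliceF : ∀ s : ℝ, ContinuousOn (F s) (Set.Icc (-1:ℝ) 1) := fun s =>
    hFc.comp (Continuous.continuousOn (by continuity))
      (fun w hw => Set.mk_mem_prod trivial hw)
  have sliceF' : ∀ s : ℝ, ContinuousOn (F' s) (Set.Icc (-1:ℝ) 1) := fun s =>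
    hF'c.comp (Continuous.continuousOn (by continuity))
      (fun w hw => Set.mk_mem_prod trivial hw)
  obtain ⟨C, hC⟩ := ((isCompact_Icc (a := t-1) (b := t+1)).prod
    (isCompact_Icc (a := (-1:ℝ)) (b := 1))).exists_bound_of_continuousOn
    (hF'c.mono (fun p hp => ⟨trivial, hp.2⟩))
  have := (intervalIntegral.hasDerivAt_integral_of_dominated_loc_of_deriv_le
    (μ := volume) (F := F) (F' := F') (a := (-1:ℝ)) (b := 1) (x₀ := t) (bound := fun _ => C)
    (Metric.ball_mem_nhds t one_pos)
    (Filter.Eventually.of_forall fun s =>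
      ((sliceF s).mono hsub).aestronglyMeasurable measurableSet_uIoc)
    (((sliceF t).mono (by rw [Set.uIcc_of_le (by norm_num : (-1:ℝ) ≤ 1)])).intervalIntegrable)
    (((sliceF' t).mono hsub).aestronglyMeasurable measurableSet_uIoc)
    (ae_of_all _ fun w hw s hs => by
      have habs : |s - t| < 1 := by simpa [Real.dist_eq] using Metric.mem_ball.mp hs
      obtain ⟨h1, h2⟩ := abs_lt.mp habs
      exact hC (s, w) (Set.mem_prod.mpr ⟨Set.mem_Icc.mpr ⟨by linarith, by linarith⟩, hsub hw⟩))
    intervalIntegrable_const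
    (ae_of_all _ fun w hw s _ => hd s w (hsub hw)))
  exact this.2

theorem stmt_13 (ε : ℝ) (hε : 0 < ε)
    (f ft fx : ℝ → ℝ → ℝ → ℝ)
    (hft : ∀ t x : ℝ, ∀ v ∈ Set.Icc (-1 : ℝ) 1,
      HasDerivAt (fun s => f s x v) (ft t x v) t)
    (hfx : ∀ t x : ℝ, ∀ v ∈ Set.Icc (-1 : ℝ) 1,
      HasDerivAt (fun y => f t y v) (fx t x v) x)
    (hfc : ContinuousOn (fun p : ℝ × ℝ × ℝ => f p.1 p.2.1 p.2.2)
      (Set.univ ×ˢ Set.univ ×ˢ Set.Icc (-1 : ℝ) 1))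
    (hftc : ContinuousOn (fun p : ℝ × ℝ × ℝ => ft p.1 p.2.1 p.2.2)
      (Set.univ ×ˢ Set.univ ×ˢ Set.Icc (-1 : ℝ) 1))
    (hfxc : ContinuousOn (fun p : ℝ × ℝ × ℝ => fx p.1 p.2.1 p.2.2)
      (Set.univ ×ˢ Set.univ ×ˢ Set.Icc (-1 : ℝ) 1))
    (ρ : ℝ → ℝ → ℝ) (g : ℝ → ℝ → ℝ → ℝ)
    (hρ : ∀ t x : ℝ, ρ t x = (1 / 2) * ∫ w in (-1 : ℝ)..1, f t x w)
    (hg : ∀ t x v : ℝ, g t x v = f t x v - ρ t x) :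
    (∀ t x : ℝ, ∀ v ∈ Set.Icc (-1 : ℝ) 1,
      ft t x v + (1 / ε) * (v * fx t x v) = (1 / ε ^ 2) * (ρ t x - f t x v))
    ↔ ((∀ t x : ℝ,
          deriv (fun s => ρ s x) t
            + (1 / ε) * deriv (fun y => (1 / 2) * ∫ w in (-1 : ℝ)..1, w * g t y w) x = 0)
        ∧ (∀ t x : ℝ, ∀ v ∈ Set.Icc (-1 : ℝ) 1,
          deriv (fun s => g s x v) t
            + (1 / ε) * (v * deriv (fun y => ρ t y) x + v * deriv (fun y => g t y v) x
              - (1 / 2) * ∫ w in (-1 : ℝ)..1, w * deriv (fun y => g t y w) x)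
          = -(1 / ε ^ 2) * g t x v)) := by
  have huIcc : Set.uIcc (-1:ℝ) 1 = Set.Icc (-1:ℝ) 1 := Set.uIcc_of_le (by norm_num)
  -- slice continuity
  have cf : ∀ t x : ℝ, ContinuousOn (fun w => f t x w) (Set.Icc (-1:ℝ) 1) := fun t x =>
    hfc.comp (Continuous.continuousOn (continuous_const.prodMk (continuous_const.prodMk continuous_id))) (fun w hw => ⟨trivial, trivial, hw⟩)
  have cft : ∀ t x : ℝ, ContinuousOn (fun w => ft t x w) (Set.Icc (-1:ℝ) 1) := fun t x =>
    hftc.comp (Continuous.continuousOn (continuous_const.prodMk (continuous_const.prodMk continuous_id))) (fun w hw => ⟨trivial, trivial, hw⟩)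
  have cfx : ∀ t x : ℝ, ContinuousOn (fun w => fx t x w) (Set.Icc (-1:ℝ) 1) := fun t x =>
    hfxc.comp (Continuous.continuousOn (continuous_const.prodMk (continuous_const.prodMk continuous_id))) (fun w hw => ⟨trivial, trivial, hw⟩)
  -- 2D slices
  have c2t : ∀ x : ℝ, ContinuousOn (fun p : ℝ × ℝ => f p.1 x p.2)
      (Set.univ ×ˢ Set.Icc (-1:ℝ) 1) := fun x =>
    hfc.comp (Continuous.continuousOn (continuous_fst.prodMk (continuous_const.prodMk continuous_snd))) (fun p hp => ⟨trivial, trivial, hp.2⟩)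
  have c2tft : ∀ x : ℝ, ContinuousOn (fun p : ℝ × ℝ => ft p.1 x p.2)
      (Set.univ ×ˢ Set.Icc (-1:ℝ) 1) := fun x =>
    hftc.comp (Continuous.continuousOn (continuous_fst.prodMk (continuous_const.prodMk continuous_snd))) (fun p hp => ⟨trivial, trivial, hp.2⟩)
  have c2x : ∀ t : ℝ, ContinuousOn (fun p : ℝ × ℝ => f t p.1 p.2)
      (Set.univ ×ˢ Set.Icc (-1:ℝ) 1) := fun t =>
    hfc.comp (Continuous.continuousOn (continuous_const.prodMk (continuous_fst.prodMk continuous_snd))) (fun p hp => ⟨trivial, trivial, hp.2⟩)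
  have c2xfx : ∀ t : ℝ, ContinuousOn (fun p : ℝ × ℝ => fx t p.1 p.2)
      (Set.univ ×ˢ Set.Icc (-1:ℝ) 1) := fun t =>
    hfxc.comp (Continuous.continuousOn (continuous_const.prodMk (continuous_fst.prodMk continuous_snd))) (fun p hp => ⟨trivial, trivial, hp.2⟩)
  -- integrability
  have intf : ∀ t x : ℝ, IntervalIntegrable (fun w => f t x w) volume (-1) 1 := fun t x =>
    ContinuousOn.intervalIntegrable (by rw [huIcc]; exact cf t x)
  have intft : ∀ t x : ℝ, IntervalIntegrable (fun w => ft t x w) volume (-1) 1 := fun t x =>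
    ContinuousOn.intervalIntegrable (by rw [huIcc]; exact cft t x)
  have intwfx : ∀ t x : ℝ, IntervalIntegrable (fun w => w * fx t x w) volume (-1) 1 :=
    fun t x => ContinuousOn.intervalIntegrable
      (by rw [huIcc]; exact continuousOn_id.mul (cfx t x))
  have intwf : ∀ t x : ℝ, IntervalIntegrable (fun w => w * f t x w) volume (-1) 1 :=
    fun t x => ContinuousOn.intervalIntegrable
      (by rw [huIcc]; exact continuousOn_id.mul (cf t x))
  have hw0 : (∫ w in (-1:ℝ)..1, w) = 0 := by
    simp
  -- ∫ f = 2 ρ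
  have hint_f : ∀ t x : ℝ, (∫ w in (-1:ℝ)..1, f t x w) = 2 * ρ t x := fun t x => by
    rw [hρ t x]; ring
  -- derivative of ρ in t
  have hA : ∀ t x : ℝ, HasDerivAt (fun s => ρ s x)
      ((1/2) * ∫ w in (-1:ℝ)..1, ft t x w) t := fun t x => by
    have h := my_param_deriv (fun s w => f s x w) (fun s w => ft s x w)
      (fun s w hw => hft s x w hw) (c2t x) (c2tft x) t
    have e : (fun s => ρ s x) = fun s => (1/2 : ℝ) * ∫ w in (-1:ℝ)..1, f s x w :=
      funext fun s => hρ s x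
    rw [e]
    exact h.const_mul (1/2)
  -- derivative of ρ in x
  have hB : ∀ t x : ℝ, HasDerivAt (fun y => ρ t y)
      ((1/2) * ∫ w in (-1:ℝ)..1, fx t x w) x := fun t x => by
    have h := my_param_deriv (fun y w => f t y w) (fun y w => fx t y w)
      (fun y w hw => hfx t y w hw) (c2x t) (c2xfx t) x
    have e : (fun y => ρ t y) = fun y => (1/2 : ℝ) * ∫ w in (-1:ℝ)..1, f t y w :=
      funext fun y => hρ t y
    rw [e]
    exact h.const_mul (1/2)
  -- derivative of g in t
  have hGt : ∀ t x : ℝ, ∀ v ∈ Set.Icc (-1:ℝ) 1, HasDerivAt (fun s => g s x v)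
      (ft t x v - (1/2) * ∫ w in (-1:ℝ)..1, ft t x w) t := fun t x v hv => by
    have e : (fun s => g s x v) = fun s => f s x v - ρ s x := funext fun s => hg s x v
    rw [e]
    exact (hft t x v hv).sub (hA t x)
  -- derivative of g in x
  have hGx : ∀ t x : ℝ, ∀ v ∈ Set.Icc (-1:ℝ) 1, HasDerivAt (fun y => g t y v)
      (fx t x v - (1/2) * ∫ w in (-1:ℝ)..1, fx t x w) x := fun t x v hv => by
    have e : (fun y => g t y v) = fun y => f t y v - ρ t y := funext fun y => hg t y v
    rw [e]
    exact (hfx t x v hv).sub (hB t x)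
  -- ∫ w g = ∫ w f
  have ewg : ∀ t y : ℝ, (∫ w in (-1:ℝ)..1, w * g t y w) = ∫ w in (-1:ℝ)..1, w * f t y w :=
    fun t y => by
    have e : (fun w => w * g t y w) = fun w => w * f t y w - w * ρ t y :=
      funext fun w => by rw [hg]; ring
    have hic : IntervalIntegrable (fun w : ℝ => w * ρ t y) volume (-1) 1 := by
      simpa using (intervalIntegrable_id (a := (-1:ℝ)) (b := 1) (μ := volume)).mul_const (ρ t y)
    rw [e, intervalIntegral.integral_sub (intwf t y) hic,
      intervalIntegral.integral_mul_const, hw0]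
    ring
  -- derivative of (1/2) ∫ w g in x
  have hWg : ∀ t x : ℝ, HasDerivAt (fun y => (1/2 : ℝ) * ∫ w in (-1:ℝ)..1, w * g t y w)
      ((1/2) * ∫ w in (-1:ℝ)..1, w * fx t x w) x := fun t x => by
    have h := my_param_deriv (fun y w => w * f t y w) (fun y w => w * fx t y w)
      (fun y w hw => (hfx t y w hw).const_mul w)
      ((continuous_snd.continuousOn).mul (c2x t))
      ((continuous_snd.continuousOn).mul (c2xfx t)) x
    have e : (fun y => (1/2 : ℝ) * ∫ w in (-1:ℝ)..1, w * g t y w)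
        = fun y => (1/2 : ℝ) * ∫ w in (-1:ℝ)..1, w * f t y w :=
      funext fun y => by rw [ewg t y]
    rw [e]
    exact h.const_mul (1/2)
  -- ∫ w ∂_x g = ∫ w fx
  have hIw : ∀ t x : ℝ, (∫ w in (-1:ℝ)..1, w * deriv (fun y => g t y w) x)
      = ∫ w in (-1:ℝ)..1, w * fx t x w := fun t x => by
    have e : Set.EqOn (fun w => w * deriv (fun y => g t y w) x)
        (fun w => w * fx t x w - w * ((1/2) * ∫ u in (-1:ℝ)..1, fx t x u))
        (Set.uIcc (-1:ℝ) 1) := fun w hw => by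
      show w * deriv (fun y => g t y w) x
        = w * fx t x w - w * ((1/2) * ∫ u in (-1:ℝ)..1, fx t x u)
      rw [(hGx t x w (huIcc ▸ hw)).deriv]; ring
    have hic : IntervalIntegrable
        (fun w : ℝ => w * ((1/2) * ∫ u in (-1:ℝ)..1, fx t x u)) volume (-1) 1 := by
      simpa using (intervalIntegrable_id (a := (-1:ℝ)) (b := 1) (μ := volume)).mul_const
        ((1/2) * ∫ u in (-1:ℝ)..1, fx t x u)
    rw [intervalIntegral.integral_congr e,
      intervalIntegral.integral_sub (intwfx t x) hic,
      intervalIntegral.integral_mul_const, hw0]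
    ring
  constructor
  · intro K
    -- macro relation : ∫ ft = -(1/ε) ∫ w fx
    have hmac : ∀ t x : ℝ, (∫ w in (-1:ℝ)..1, ft t x w)
        = -(1/ε) * ∫ w in (-1:ℝ)..1, w * fx t x w := fun t x => by
      have e : Set.EqOn (fun w => ft t x w)
          (fun w => (1/ε^2) * (ρ t x - f t x w) - (1/ε) * (w * fx t x w))
          (Set.uIcc (-1:ℝ) 1) := fun w hw => by
        have := K t x w (huIcc ▸ hw); linarith
      rw [intervalIntegral.integral_congr e,
        intervalIntegral.integral_sub
          (((intervalIntegrable_const (c := ρ t x)).sub (intf t x)).const_mul (1/ε^2))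
          ((intwfx t x).const_mul (1/ε)),
        intervalIntegral.integral_const_mul, intervalIntegral.integral_const_mul,
        intervalIntegral.integral_sub (intervalIntegrable_const (c := ρ t x)) (intf t x),
        intervalIntegral.integral_const, hint_f t x]
      simp only [smul_eq_mul]
      ring
    constructor
    · intro t x
      rw [(hA t x).deriv, (hWg t x).deriv]
      linear_combination (1/2) * hmac t x
    · intro t x v hv
      rw [(hGt t x v hv).deriv, (hB t x).deriv, (hGx t x v hv).deriv, hIw t x, hg t x v]
      linear_combination (K t x v hv) - (1/2) * hmac t x
  · rintro ⟨hmac, hmic⟩ t x v hv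
    have e1 := hmac t x
    rw [(hA t x).deriv, (hWg t x).deriv] at e1
    have e2 := hmic t x v hv
    rw [(hGt t x v hv).deriv, (hB t x).deriv, (hGx t x v hv).deriv, hIw t x, hg t x v] at e2
    linear_combination e1 + e2
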